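/- Let φ be a finite Blaschke product of degree m ≥ 1, and let z₁, …, z_{m+1} ∈ 𝕋 be pairwise distinct points satisfying z_k·φ(z_k) = 1 for each k (φ being a rational function, it is defined on 𝕋). For each k set t_k = φ(z_k)/(φ(z_k) + z_k·φ'(z_k)). Then each t_k is a real number with 0 < t_k < 1, one has t₁ + ⋯ + t_{m+1} = 1, and the partial fraction expansion φ(z)/(z·φ(z) − 1) = Σ_{k=1}^{m+1} t_k/(z − z_k) holds for all z ∈ 𝔻. -/

import Mathlib

open Complex Metric

lemma den_ne (c ζ : ℂ) (hc : ‖c‖ < 1) (hζ : ‖ζ‖ ≤ 1) :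
    1 - (starRingEnd ℂ) c * ζ ≠ 0 := by
  intro h
  have h2 : (1:ℂ) = (starRingEnd ℂ) c * ζ := by linear_combination h
  have := congrArg (fun x : ℂ => ‖x‖) h2
  simp [map_mul] at this
  nlinarith [norm_nonneg ζ, norm_nonneg c]

lemma aux_term (ζ c : ℂ) (hζ : ‖ζ‖ = 1) (hc : ‖c‖ < 1) :
    ζ / (ζ - c) + ζ * (starRingEnd ℂ) c / (1 - (starRingEnd ℂ) c * ζ)
      = (((1 - ‖c‖ ^ 2) / ‖ζ - c‖ ^ 2 : ℝ) : ℂ) := by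
  have hne : ζ - c ≠ 0 := by
    intro h; rw [sub_eq_zero] at h; rw [h] at hζ; exact absurd hζ (ne_of_lt hc)
  have hden := den_ne c ζ hc hζ.le
  have habs : ((‖ζ - c‖ ^ 2 : ℝ) : ℂ) = (ζ - c) * (starRingEnd ℂ) (ζ - c) := by
    rw [← Complex.normSq_eq_norm_sq]; push_cast [Complex.mul_conj]; rfl
  have habsc : ((‖c‖ ^ 2 : ℝ) : ℂ) = c * (starRingEnd ℂ) c := by
    rw [← Complex.normSq_eq_norm_sq]; push_cast [Complex.mul_conj]; rfl
  have hζζ : ζ * (starRingEnd ℂ) ζ = 1 := by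
    rw [Complex.mul_conj]; norm_cast; rw [Complex.normSq_eq_norm_sq, hζ]; norm_num
  have habsne : ((‖ζ - c‖ ^ 2 : ℝ) : ℂ) ≠ 0 := by
    rw [habs]
    exact mul_ne_zero hne (star_ne_zero.mpr hne)
  rw [Complex.ofReal_div, Complex.ofReal_sub, Complex.ofReal_one]
  rw [div_add_div _ _ hne hden, div_eq_div_iff (mul_ne_zero hne hden) habsne]
  rw [habs, habsc]
  simp only [map_sub]
  linear_combination (1 - c * (starRingEnd ℂ) c) * (ζ - c) * hζζ

lemma derivative_finset_prod {ι : Type*} [DecidableEq ι] (s : Finset ι) (f : ι → Polynomial ℂ) :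
    Polynomial.derivative (∏ i ∈ s, f i)
      = ∑ i ∈ s, (∏ j ∈ s.erase i, f j) * Polynomial.derivative (f i) := by
  induction s using Finset.induction_on with
  | empty => simp
  | @insert a s ha ih =>
    have hstep : ∀ i ∈ s, (∏ j ∈ (insert a s).erase i, f j) * Polynomial.derivative (f i)
        = f a * ((∏ j ∈ s.erase i, f j) * Polynomial.derivative (f i)) := by
      intro i hi
      rw [Finset.erase_insert_of_ne (ne_of_mem_of_not_mem hi ha).symm,
        Finset.prod_insert (fun h => ha (Finset.mem_of_mem_erase h))]
      ring
    rw [Finset.prod_insert ha, Polynomial.derivative_mul, ih, Finset.sum_insert ha,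
      Finset.erase_insert ha, Finset.mul_sum, Finset.sum_congr rfl hstep, ← Finset.mul_sum,
      mul_comm (Polynomial.derivative (f a))]


/-- `φ` is a finite Blaschke product of degree `m`: a unimodular constant times a product
of `m` Möbius factors `(z - bₖ)/(1 - conj bₖ · z)` with zeros `bₖ` in the unit disk. -/
def IsBlaschke (m : ℕ) (φ : ℂ → ℂ) : Prop :=
  ∃ (l : ℂ) (b : Fin m → ℂ), ‖l‖ = 1 ∧ (∀ k, b k ∈ ball (0:ℂ) 1) ∧
    φ = fun z => l * ∏ k, (z - b k) / (1 - (starRingEnd ℂ) (b k) * z)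

theorem stmt8 (m : ℕ) (hm : 1 ≤ m) (φ : ℂ → ℂ) (hφ : IsBlaschke m φ)
    (z : Fin (m + 1) → ℂ) (hz : Function.Injective z)
    (hzT : ∀ k, ‖z k‖ = 1)
    (hfix : ∀ k, z k * φ (z k) = 1) :
    (∀ k, (φ (z k) / (φ (z k) + z k * deriv φ (z k))).im = 0 ∧
      0 < (φ (z k) / (φ (z k) + z k * deriv φ (z k))).re ∧
      (φ (z k) / (φ (z k) + z k * deriv φ (z k))).re < 1) ∧
    (∑ k, φ (z k) / (φ (z k) + z k * deriv φ (z k))) = 1 ∧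
    ∀ w ∈ ball (0:ℂ) 1,
      φ w / (w * φ w - 1)
        = ∑ k, (φ (z k) / (φ (z k) + z k * deriv φ (z k))) / (w - z k) := by
  classical
  obtain ⟨l, b, hl, hb, hφdef⟩ := hφ
  have hl0 : l ≠ 0 := by intro h; rw [h] at hl; simp at hl
  have hb' : ∀ j, ‖b j‖ < 1 := by
    intro j; simpa [Metric.mem_ball, Complex.dist_eq] using hb j
  set P : Polynomial ℂ := ∏ k, (Polynomial.X - Polynomial.C (b k)) with hPdef
  set Q : Polynomial ℂ := ∏ k, (1 - Polynomial.C ((starRingEnd ℂ) (b k)) * Polynomial.X) with hQdef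
  have hPev : ∀ w, P.eval w = ∏ k, (w - b k) := by
    intro w; simp [hPdef, Polynomial.eval_prod]
  have hQev : ∀ w, Q.eval w = ∏ k, (1 - (starRingEnd ℂ) (b k) * w) := by
    intro w; simp [hQdef, Polynomial.eval_prod]
  have hφP : ∀ w, φ w = l * P.eval w / Q.eval w := by
    intro w
    simp only [hφdef, hPev, hQev, Finset.prod_div_distrib, mul_div_assoc]
  have hQne : ∀ w : ℂ, ‖w‖ ≤ 1 → Q.eval w ≠ 0 := by
    intro w hw
    rw [hQev]
    exact Finset.prod_ne_zero_iff.mpr fun j _ => den_ne (b j) w (hb' j) hw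
  have hzb : ∀ k j, z k - b j ≠ 0 := by
    intro k j h
    rw [sub_eq_zero] at h
    have := hzT k; rw [h] at this; exact absurd this (ne_of_lt (hb' j))
  have hPz : ∀ k, P.eval (z k) ≠ 0 := by
    intro k; rw [hPev]; exact Finset.prod_ne_zero_iff.mpr fun j _ => hzb k j
  have hQz : ∀ k, Q.eval (z k) ≠ 0 := fun k => hQne _ (le_of_eq (hzT k))
  have hPm : P.Monic := Polynomial.monic_prod_of_monic _ _ fun k _ => Polynomial.monic_X_sub_C _
  have hPdeg : P.natDegree = m := by
    rw [hPdef, Polynomial.natDegree_prod_of_monic _ _ fun k _ => Polynomial.monic_X_sub_C _]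
    simp
  have hQdeg : Q.natDegree ≤ m := by
    refine le_trans (Polynomial.natDegree_prod_le _ _) ?_
    refine le_trans (Finset.sum_le_sum (g := fun _ => 1) fun j _ => ?_) (by simp)
    refine le_trans (Polynomial.natDegree_sub_le _ _) ?_
    simp [Polynomial.natDegree_C_mul_le]
    exact le_trans (Polynomial.natDegree_C_mul_le _ _) (by simp)
  -- N and R
  set N : Polynomial ℂ := Polynomial.C l * (Polynomial.X * P) - Q with hNdef
  set R : Polynomial ℂ := ∏ k, (Polynomial.X - Polynomial.C (z k)) with hRdef
  have hRev : ∀ w, R.eval w = ∏ k, (w - z k) := by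
    intro w; simp [hRdef, Polynomial.eval_prod]
  have hRm : R.Monic := Polynomial.monic_prod_of_monic _ _ fun k _ => Polynomial.monic_X_sub_C _
  have hRdeg : R.natDegree = m + 1 := by
    rw [hRdef, Polynomial.natDegree_prod_of_monic _ _ fun k _ => Polynomial.monic_X_sub_C _]
    simp
  have hXP : (Polynomial.X * P).natDegree = m + 1 := by
    rw [Polynomial.natDegree_mul Polynomial.X_ne_zero hPm.ne_zero, Polynomial.natDegree_X, hPdeg,
      add_comm]
  have hXPc : (Polynomial.X * P).coeff (m + 1) = 1 := by
    rw [Polynomial.coeff_X_mul]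
    have := hPm.coeff_natDegree
    rwa [hPdeg] at this
  have hNz : ∀ k, N.eval (z k) = 0 := by
    intro k
    have h1 := hfix k
    rw [hφP (z k)] at h1
    have h2 : l * (z k * P.eval (z k)) = Q.eval (z k) := by
      field_simp at h1
      rw [div_eq_one_iff_eq (hQz k)] at h1
      linear_combination h1
    simp only [hNdef, Polynomial.eval_sub, Polynomial.eval_mul, Polynomial.eval_C,
      Polynomial.eval_X]
    linear_combination h2
  have hNR : N = Polynomial.C l * R := by
    have hcard : (Polynomial.C l * R - N).natDegree < Fintype.card (Fin (m + 1)) := by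
      rw [Fintype.card_fin]
      refine lt_of_le_of_lt (?_ : _ ≤ m) (Nat.lt_succ_self m)
      rw [Polynomial.natDegree_le_iff_coeff_eq_zero]
      intro j hj
      have hAdeg : (Polynomial.C l * (Polynomial.X * P)).natDegree ≤ m + 1 :=
        le_trans (Polynomial.natDegree_C_mul_le _ _) (le_of_eq hXP)
      have hCRdeg : (Polynomial.C l * R).natDegree ≤ m + 1 :=
        le_trans (Polynomial.natDegree_C_mul_le _ _) (le_of_eq hRdeg)
      rcases eq_or_lt_of_le (Nat.succ_le_of_lt hj) with h | h
      · have hj' : j = m + 1 := h.symm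
        subst hj'
        rw [Polynomial.coeff_sub, hNdef, Polynomial.coeff_sub, Polynomial.coeff_C_mul,
          Polynomial.coeff_C_mul, hXPc, Polynomial.coeff_eq_zero_of_natDegree_lt
            (lt_of_le_of_lt hQdeg (Nat.lt_succ_self m))]
        have : R.coeff (m + 1) = 1 := by
          have := hRm.coeff_natDegree; rwa [hRdeg] at this
        rw [this]; ring
      · have h1 : (Polynomial.C l * R).coeff j = 0 :=
          Polynomial.coeff_eq_zero_of_natDegree_lt (lt_of_le_of_lt hCRdeg h)
        have h2 : N.coeff j = 0 := by
          rw [hNdef, Polynomial.coeff_sub,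
            Polynomial.coeff_eq_zero_of_natDegree_lt (lt_of_le_of_lt hAdeg h),
            Polynomial.coeff_eq_zero_of_natDegree_lt
              (lt_of_le_of_lt hQdeg (lt_trans (Nat.lt_succ_self m) h))]
          ring
        rw [Polynomial.coeff_sub, h1, h2, sub_zero]
    have := Polynomial.eq_zero_of_natDegree_lt_card_of_eval_eq_zero
      (Polynomial.C l * R - N) hz (fun k => by
        simp only [Polynomial.eval_sub, Polynomial.eval_mul, Polynomial.eval_C, hNz k, hRev,
          sub_zero]
        rw [Finset.prod_eq_zero (Finset.mem_univ k) (sub_self (z k))]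
        ring) hcard
    linear_combination -this
  -- derivatives
  have hder : ∀ ζ : ℂ, Polynomial.eval ζ Q ≠ 0 → HasDerivAt φ
      ((l * Polynomial.eval ζ (Polynomial.derivative P) * Polynomial.eval ζ Q -
        l * Polynomial.eval ζ P * Polynomial.eval ζ (Polynomial.derivative Q)) /
        Polynomial.eval ζ Q ^ 2) ζ := by
    intro ζ hQζ
    have hfun : φ = fun w => Polynomial.eval w (Polynomial.C l * P) / Polynomial.eval w Q := by
      funext w; rw [hφP w]; simp
    rw [hfun]
    have h1 := (Polynomial.C l * P).hasDerivAt (𝕜 := ℂ) ζ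
    have h2 := Q.hasDerivAt (𝕜 := ℂ) ζ
    have h3 := h1.div h2 hQζ
    convert h3 using 1
    case e'_4 => rfl
    case e'_5 => rfl
    case e'_8 => rfl
    rw [Polynomial.derivative_C_mul]
    simp only [Polynomial.eval_mul, Polynomial.eval_C]
  have hderiv_val : ∀ k, deriv φ (z k) =
      (l * Polynomial.eval (z k) (Polynomial.derivative P) * Polynomial.eval (z k) Q -
        l * Polynomial.eval (z k) P * Polynomial.eval (z k) (Polynomial.derivative Q)) /
        Polynomial.eval (z k) Q ^ 2 := fun k => (hder _ (hQz k)).deriv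
  have hNd : ∀ k, Polynomial.eval (z k) (Polynomial.derivative N) =
      l * Polynomial.eval (z k) (Polynomial.derivative R) := by
    intro k
    rw [hNR, Polynomial.derivative_C_mul]
    simp
  have hsum_den : ∀ k, φ (z k) + z k * deriv φ (z k) =
      l * Polynomial.eval (z k) (Polynomial.derivative R) / Polynomial.eval (z k) Q := by
    intro k
    have hG : HasDerivAt (fun w => Polynomial.eval w N / Polynomial.eval w Q)
        ((Polynomial.eval (z k) (Polynomial.derivative N) * Polynomial.eval (z k) Q -
          Polynomial.eval (z k) N * Polynomial.eval (z k) (Polynomial.derivative Q)) /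
          Polynomial.eval (z k) Q ^ 2) (z k) :=
      (N.hasDerivAt _).div (Q.hasDerivAt _) (hQz k)
    have hEq : (fun w => Polynomial.eval w N / Polynomial.eval w Q)
        =ᶠ[nhds (z k)] fun w => w * φ w - 1 := by
      have hev : ∀ᶠ w in nhds (z k), Polynomial.eval w Q ≠ 0 :=
        (Q.continuousAt (a := z k)).eventually_ne (hQz k)
      filter_upwards [hev] with w hw
      rw [hφP w]
      simp only [hNdef, Polynomial.eval_sub, Polynomial.eval_mul, Polynomial.eval_C,
        Polynomial.eval_X]
      field_simp
    have h3 : HasDerivAt (fun w => w * φ w - 1) (1 * φ (z k) + z k * deriv φ (z k)) (z k) := by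
      have hd := hder _ (hQz k)
      rw [← hderiv_val k] at hd
      exact ((hasDerivAt_id _).mul hd).sub_const 1
    have h4 := (hG.congr_of_eventuallyEq hEq.symm).unique h3
    rw [hNz k, hNd k, one_mul] at h4
    rw [← h4]
    have := hQz k
    field_simp
    ring
  -- derivative of R at nodes
  have hR' : ∀ k, Polynomial.eval (z k) (Polynomial.derivative R) =
      ∏ j ∈ Finset.univ.erase k, (z k - z j) := by
    intro k
    have hnod : R = Lagrange.nodal Finset.univ z := by rw [hRdef, Lagrange.nodal]
    rw [hnod, Lagrange.eval_nodal_derivative_eval_node_eq (Finset.mem_univ k), Lagrange.eval_nodal]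
  have hzz : ∀ (k j : Fin (m + 1)), j ≠ k → z k - z j ≠ 0 := fun k j h =>
    sub_ne_zero.mpr fun e => h (hz e.symm)
  have hR'ne : ∀ k, Polynomial.eval (z k) (Polynomial.derivative R) ≠ 0 := by
    intro k
    rw [hR' k]
    exact Finset.prod_ne_zero_iff.mpr fun j hj => hzz k j (Finset.ne_of_mem_erase hj)
  set t : Fin (m + 1) → ℂ := fun k => φ (z k) / (φ (z k) + z k * deriv φ (z k)) with htdef
  have hφz : ∀ k, φ (z k) ≠ 0 := by
    intro k h
    have h1 := hfix k
    rw [h, mul_zero] at h1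
    exact one_ne_zero h1.symm
  have htP : ∀ k, t k = Polynomial.eval (z k) P / Polynomial.eval (z k) (Polynomial.derivative R) := by
    intro k
    have h1 : t k = (l * Polynomial.eval (z k) P / Polynomial.eval (z k) Q) /
        (l * Polynomial.eval (z k) (Polynomial.derivative R) / Polynomial.eval (z k) Q) := by
      rw [htdef]
      simp only []
      rw [hsum_den k, hφP]
    rw [h1]
    rw [div_div_div_comm, div_self (hQz k), div_one, mul_div_mul_left _ _ hl0]
  -- the interpolation identity
  have hEk : ∀ (k i : Fin (m + 1)), Polynomial.eval (z i)
      (∏ j ∈ Finset.univ.erase k, (Polynomial.X - Polynomial.C (z j)))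
      = ∏ j ∈ Finset.univ.erase k, (z i - z j) := by
    intro k i; simp [Polynomial.eval_prod]
  have hcard_er : ∀ k : Fin (m + 1), (Finset.univ.erase k).card = m := by
    intro k
    rw [Finset.card_erase_of_mem (Finset.mem_univ k)]
    simp
  have hmon_er : ∀ k : Fin (m + 1),
      (∏ j ∈ Finset.univ.erase k, (Polynomial.X - Polynomial.C (z j))).Monic :=
    fun k => Polynomial.monic_prod_of_monic _ _ fun j _ => Polynomial.monic_X_sub_C _
  have hdeg_er : ∀ k : Fin (m + 1),
      (∏ j ∈ Finset.univ.erase k, (Polynomial.X - Polynomial.C (z j))).natDegree = m := by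
    intro k
    rw [Polynomial.natDegree_prod_of_monic _ _ fun j _ => Polynomial.monic_X_sub_C _]
    simp [hcard_er k]
  have hinterp : P = ∑ k, Polynomial.C (t k) *
      ∏ j ∈ Finset.univ.erase k, (Polynomial.X - Polynomial.C (z j)) := by
    set S : Polynomial ℂ := ∑ k, Polynomial.C (t k) *
      ∏ j ∈ Finset.univ.erase k, (Polynomial.X - Polynomial.C (z j)) with hSdef
    have hSdeg : S.natDegree ≤ m := by
      refine le_trans (Polynomial.natDegree_sum_le _ _) ?_
      rw [Finset.fold_max_le]
      refine ⟨Nat.zero_le m, fun k _ => ?_⟩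
      exact le_trans (Polynomial.natDegree_C_mul_le _ _) (le_of_eq (hdeg_er k))
    have hdeg : (P - S).natDegree < Fintype.card (Fin (m + 1)) := by
      rw [Fintype.card_fin]
      exact lt_of_le_of_lt (le_trans (Polynomial.natDegree_sub_le _ _)
        (max_le (le_of_eq hPdeg) hSdeg)) (Nat.lt_succ_self m)
    have heval : ∀ i, (P - S).eval (z i) = 0 := by
      intro i
      rw [Polynomial.eval_sub, hSdef, Polynomial.eval_finset_sum]
      have hterm : ∀ k, Polynomial.eval (z i) (Polynomial.C (t k) *
          ∏ j ∈ Finset.univ.erase k, (Polynomial.X - Polynomial.C (z j)))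
          = t k * ∏ j ∈ Finset.univ.erase k, (z i - z j) := by
        intro k; rw [Polynomial.eval_mul, Polynomial.eval_C, hEk k i]
      rw [Finset.sum_congr rfl fun k _ => hterm k]
      rw [Finset.sum_eq_single i (fun k _ hk => by
        rw [Finset.prod_eq_zero (Finset.mem_erase.mpr ⟨(Ne.symm hk), Finset.mem_univ i⟩)
          (sub_self (z i)), mul_zero]) (fun h => absurd (Finset.mem_univ i) h)]
      rw [← hR' i, htP i, div_mul_cancel₀ _ (hR'ne i), sub_self]
    have h0 := Polynomial.eq_zero_of_natDegree_lt_card_of_eval_eq_zero (P - S) hz heval hdeg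
    linear_combination h0
  -- sum of t equals 1
  have hsum1 : ∑ k, t k = 1 := by
    have hc := congrArg (fun p => Polynomial.coeff p m) hinterp
    simp only [Polynomial.finset_sum_coeff, Polynomial.coeff_C_mul] at hc
    have hPc : P.coeff m = 1 := by
      have := hPm.coeff_natDegree; rwa [hPdeg] at this
    have hprodc : ∀ k : Fin (m + 1),
        (∏ j ∈ Finset.univ.erase k, (Polynomial.X - Polynomial.C (z j))).coeff m = 1 := by
      intro k
      have := (hmon_er k).coeff_natDegree
      rwa [hdeg_er k] at this
    rw [hPc] at hc
    rw [Finset.sum_congr rfl fun k _ => by rw [hprodc k, mul_one]] at hc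
    exact hc.symm
  -- part 3
  have hpart3 : ∀ w ∈ Metric.ball (0:ℂ) 1, φ w / (w * φ w - 1) = ∑ k, t k / (w - z k) := by
    intro w hw
    have hw1 : ‖w‖ < 1 := by simpa [Complex.dist_eq] using hw
    have hQw : Polynomial.eval w Q ≠ 0 := hQne w hw1.le
    have hwz : ∀ k, w - z k ≠ 0 := by
      intro k h
      rw [sub_eq_zero] at h
      have h2 := hzT k
      rw [← h] at h2
      exact absurd h2 (ne_of_lt hw1)
    have hRw : Polynomial.eval w R ≠ 0 := by
      rw [hRev]
      exact Finset.prod_ne_zero_iff.mpr fun k _ => hwz k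
    have hNev : l * (w * Polynomial.eval w P) - Polynomial.eval w Q
        = l * Polynomial.eval w R := by
      have h5 := congrArg (Polynomial.eval w) hNR
      simpa [hNdef] using h5
    have hNw : w * φ w - 1 = l * Polynomial.eval w R / Polynomial.eval w Q := by
      rw [hφP w]
      field_simp
      linear_combination hNev
    rw [hNw, hφP w, div_div_div_comm, div_self hQw, div_one, mul_div_mul_left _ _ hl0]
    have hPw : Polynomial.eval w P = ∑ k, t k * ∏ j ∈ Finset.univ.erase k, (w - z j) := by
      have h6 := congrArg (Polynomial.eval w) hinterp
      rw [Polynomial.eval_finset_sum] at h6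
      simpa [Polynomial.eval_prod] using h6
    rw [hPw, hRev, Finset.sum_div]
    refine Finset.sum_congr rfl fun k _ => ?_
    have hE : (∏ j ∈ Finset.univ.erase k, (w - z j)) ≠ 0 :=
      Finset.prod_ne_zero_iff.mpr fun j _ => hwz j
    rw [← Finset.mul_prod_erase _ _ (Finset.mem_univ k),
      div_eq_div_iff (mul_ne_zero (hwz k) hE) (hwz k)]
    ring
  -- part 1
  have hpart1 : ∀ k, ∃ s : ℝ, 0 < s ∧
      φ (z k) / (φ (z k) + z k * deriv φ (z k)) = ((1/(1+s) : ℝ) : ℂ) := by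
    intro k
    set s : ℝ := ∑ j, (1 - ‖b j‖^2)/‖z k - b j‖^2 with hsdef
    have hspos : 0 < s := by
      rw [hsdef]
      refine Finset.sum_pos (fun j _ => div_pos ?_ ?_) ⟨⟨0, hm⟩, Finset.mem_univ _⟩
      · nlinarith [hb' j, norm_nonneg (b j)]
      · have := norm_pos_iff.mpr (hzb k j)
        positivity
    refine ⟨s, hspos, ?_⟩
    have hcast : (s : ℂ) = ∑ j, (z k / (z k - b j) +
        z k * (starRingEnd ℂ) (b j) / (1 - (starRingEnd ℂ) (b j) * z k)) := by
      rw [hsdef, Complex.ofReal_sum]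
      exact Finset.sum_congr rfl fun j _ => (aux_term (z k) (b j) (hzT k) (hb' j)).symm
    have hPder : Polynomial.eval (z k) (Polynomial.derivative P)
        = ∑ j, ∏ i ∈ Finset.univ.erase j, (z k - b i) := by
      rw [hPdef, derivative_finset_prod, Polynomial.eval_finset_sum]
      refine Finset.sum_congr rfl fun j _ => ?_
      simp [Polynomial.eval_prod]
    have hQder : Polynomial.eval (z k) (Polynomial.derivative Q)
        = ∑ j, (∏ i ∈ Finset.univ.erase j, (1 - (starRingEnd ℂ) (b i) * z k))
          * (-(starRingEnd ℂ) (b j)) := by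
      rw [hQdef, derivative_finset_prod, Polynomial.eval_finset_sum]
      refine Finset.sum_congr rfl fun j _ => ?_
      simp [Polynomial.eval_prod, Polynomial.derivative_C_mul_X]
    have main : z k * (Polynomial.eval (z k) (Polynomial.derivative P) * Polynomial.eval (z k) Q
        - Polynomial.eval (z k) P * Polynomial.eval (z k) (Polynomial.derivative Q))
        = (s:ℂ) * (Polynomial.eval (z k) P * Polynomial.eval (z k) Q) := by
      rw [hcast, hPder, hQder, Finset.sum_mul, Finset.mul_sum, ← Finset.sum_sub_distrib,
        Finset.mul_sum, Finset.sum_mul]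
      refine Finset.sum_congr rfl fun j _ => ?_
      have hPsplit : Polynomial.eval (z k) P
          = (z k - b j) * ∏ i ∈ Finset.univ.erase j, (z k - b i) := by
        rw [hPev]; exact (Finset.mul_prod_erase _ _ (Finset.mem_univ j)).symm
      have hQsplit : Polynomial.eval (z k) Q
          = (1 - (starRingEnd ℂ) (b j) * z k)
            * ∏ i ∈ Finset.univ.erase j, (1 - (starRingEnd ℂ) (b i) * z k) := by
        rw [hQev]; exact (Finset.mul_prod_erase _ _ (Finset.mem_univ j)).symm
      rw [hPsplit, hQsplit]
      have h1 := hzb k j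
      have h2 := den_ne (b j) (z k) (hb' j) (hzT k).le
      have h2' : 1 - z k * (starRingEnd ℂ) (b j) ≠ 0 := by rwa [mul_comm] at h2
      field_simp
      ring
    have hld : z k * deriv φ (z k) = (s:ℂ) * φ (z k) := by
      rw [hderiv_val k, hφP, mul_div_assoc', mul_div_assoc',
        div_eq_div_iff (pow_ne_zero 2 (hQz k)) (hQz k)]
      linear_combination l * Polynomial.eval (z k) Q * main
    rw [hld]
    have h1s : (0:ℝ) < 1 + s := by linarith [hspos]
    have hne : (((1 + s : ℝ)) : ℂ) ≠ 0 := Complex.ofReal_ne_zero.mpr (ne_of_gt h1s)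
    rw [show φ (z k) + (s:ℂ) * φ (z k) = (((1 + s : ℝ)) : ℂ) * φ (z k) by push_cast; ring]
    rw [div_mul_eq_div_div_swap, div_self (hφz k)]
    norm_cast
  refine ⟨fun k => ?_, hsum1, hpart3⟩
  obtain ⟨s, hs, heq⟩ := hpart1 k
  rw [heq]
  refine ⟨Complex.ofReal_im _, ?_, ?_⟩
  · rw [Complex.ofReal_re]
    positivity
  · rw [Complex.ofReal_re, div_lt_one (by linarith)]
    linarith
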